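/- Let R be a commutative ring equipped with a derivation δ : R → R (additive and satisfying the Leibniz rule), extended coefficientwise to Laurent polynomials in x_1,…,x_n over R. Let g and ω be Laurent polynomials over R and m ≥ 1. Then δ(constant term of g^m·ω) − (constant term of g^m·δ(ω)) lies in the ideal mR. (This shows the period map mod m given by ω ↦ constant term of g^m ω commutes with δ modulo m.) -/

import Mathlib

noncomputable section

section Aux

variable {R : Type*} [CommRing R] {n : ℕ}
variable (δ : R → R)

/-- Induction principle for `AddMonoidAlgebra`, with well-typed binders. -/
theorem amaInduction {p : AddMonoidAlgebra R (Fin n → ℤ) → Prop}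
    (f : AddMonoidAlgebra R (Fin n → ℤ)) (h0 : p 0)
    (ha : ∀ (a : Fin n → ℤ) (b : R) (f : AddMonoidAlgebra R (Fin n → ℤ)),
      p f → p (AddMonoidAlgebra.single a b + f)) : p f :=
  AddMonoidAlgebra.induction f h0 (fun a b f _ _ hf => ha a b f hf)

/-- Coefficientwise derivation on Laurent polynomials, as an additive hom. -/
def Dhom (hadd : ∀ a b : R, δ (a + b) = δ a + δ b) :
    AddMonoidAlgebra R (Fin n → ℤ) →+ AddMonoidAlgebra R (Fin n → ℤ) :=
  { toFun := AddMonoidAlgebra.map (AddMonoidHom.mk' δ hadd)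
    map_zero' := AddMonoidAlgebra.map_zero _
    map_add' := AddMonoidAlgebra.map_add _ }

theorem Dhom_apply (hadd : ∀ a b : R, δ (a + b) = δ a + δ b)
    (f : AddMonoidAlgebra R (Fin n → ℤ)) (w : Fin n → ℤ) :
    (Dhom δ hadd f).coeff w = δ (f.coeff w) := rfl

theorem Dhom_single (hadd : ∀ a b : R, δ (a + b) = δ a + δ b)
    (a : Fin n → ℤ) (r : R) :
    Dhom δ hadd (AddMonoidAlgebra.single a r) = AddMonoidAlgebra.single a (δ r) := by
  have h0 : δ 0 = 0 := (AddMonoidHom.mk' δ hadd).map_zero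
  ext w
  rw [Dhom_apply]
  by_cases hw : w = a
  · subst hw; simp [AddMonoidAlgebra.coeff_single_apply]
  · simp [AddMonoidAlgebra.coeff_single_apply, Ne.symm hw, h0]

theorem Dhom_mul (hadd : ∀ a b : R, δ (a + b) = δ a + δ b)
    (hleibniz : ∀ a b : R, δ (a * b) = a * δ b + δ a * b)
    (f g : AddMonoidAlgebra R (Fin n → ℤ)) :
    Dhom δ hadd (f * g) = f * Dhom δ hadd g + Dhom δ hadd f * g := by
  set D := Dhom (n := n) δ hadd with hD
  induction f using amaInduction generalizing g with
  | h0 => simp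
  | ha a r f' ih =>
    have hsingle : ∀ h : AddMonoidAlgebra R (Fin n → ℤ),
        D (AddMonoidAlgebra.single a r * h)
          = AddMonoidAlgebra.single a r * D h
            + D (AddMonoidAlgebra.single a r) * h := by
      intro h
      induction h using amaInduction with
      | h0 => simp
      | ha b s h' ih2 =>
        have hss : D (AddMonoidAlgebra.single a r * AddMonoidAlgebra.single b s)
            = AddMonoidAlgebra.single a r * D (AddMonoidAlgebra.single b s)
              + D (AddMonoidAlgebra.single a r) * AddMonoidAlgebra.single b s := by
          rw [hD, AddMonoidAlgebra.single_mul_single, Dhom_single, Dhom_single,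
            Dhom_single, AddMonoidAlgebra.single_mul_single,
            AddMonoidAlgebra.single_mul_single, hleibniz]
          exact AddMonoidAlgebra.single_add _ _ _
        rw [mul_add, map_add, ih2, hss, map_add, mul_add, mul_add]
        abel
    rw [add_mul, map_add, ih, hsingle, map_add, add_mul, add_mul]
    abel

theorem Dhom_pow (hadd : ∀ a b : R, δ (a + b) = δ a + δ b)
    (hleibniz : ∀ a b : R, δ (a * b) = a * δ b + δ a * b)
    (g : AddMonoidAlgebra R (Fin n → ℤ)) (k : ℕ) :
    Dhom δ hadd (g ^ (k + 1)) = (k + 1) • (g ^ k * Dhom δ hadd g) := by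
  induction k with
  | zero => simp
  | succ k ih =>
    rw [pow_succ, Dhom_mul δ hadd hleibniz, ih, smul_mul_assoc]
    have h1 : g ^ (k + 1) * Dhom δ hadd g = g ^ k * Dhom δ hadd g * g := by
      rw [pow_succ]; ring
    rw [h1]
    conv_rhs => rw [succ_nsmul]
    abel

end Aux

/-- The period map mod `m` given by `ω ↦ constant term of g^m·ω` commutes with a
derivation `δ` modulo `m`: `δ(constant term of g^m·ω) − constant term of g^m·δ(ω) ∈ mR`.
Here `Dω` is the coefficientwise application of `δ` to `ω`. -/
theorem periodMap_modm_commutes_derivation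
    {R : Type*} [CommRing R] (n : ℕ)
    (δ : R → R)
    (hadd : ∀ a b : R, δ (a + b) = δ a + δ b)
    (hleibniz : ∀ a b : R, δ (a * b) = a * δ b + δ a * b)
    (g ω Dω : AddMonoidAlgebra R (Fin n → ℤ))
    (hDω : ∀ w : Fin n → ℤ, Dω.coeff w = δ (ω.coeff w))
    (m : ℕ) (hm : 1 ≤ m) :
    (m : R) ∣ δ ((g ^ m * ω).coeff 0) - (g ^ m * Dω).coeff 0 := by
  obtain ⟨k, rfl⟩ : ∃ k, m = k + 1 := ⟨m - 1, (Nat.succ_pred_eq_of_pos hm).symm⟩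
  set D := Dhom (n := n) δ hadd with hD
  have hDω' : Dω = D ω := by
    ext w; rw [hDω, hD, Dhom_apply]
  have key : D (g ^ (k + 1) * ω)
      = g ^ (k + 1) * D ω + (k + 1) • (g ^ k * D g) * ω := by
    rw [hD, Dhom_mul δ hadd hleibniz, Dhom_pow δ hadd hleibniz]
  have h0 : δ ((g ^ (k + 1) * ω).coeff 0)
      = (g ^ (k + 1) * Dω).coeff 0 + (k + 1) • ((g ^ k * D g * ω).coeff 0) := by
    rw [← Dhom_apply δ hadd, ← hD, key, hDω', AddMonoidAlgebra.coeff_add, Finsupp.add_apply, smul_mul_assoc,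
      AddMonoidAlgebra.coeff_smul, Finsupp.smul_apply]
  rw [h0]
  refine ⟨(g ^ k * D g * ω).coeff 0, ?_⟩
  rw [nsmul_eq_mul]
  push_cast
  ring
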